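/- arXiv:1710.04621 — 2 statements merged into one kernel-verified Lean document; each statement's English description precedes it below -/
import Mathlib

section
/- If f : ℝ → ℝ is of bounded variation on ℝ with |f| ≤ M, and χ is continuous with A_χ := sup_{u∈ℝ}∑_{k∈ℤ}|χ(u−k)| < ∞, then the sampling series with averaged kernel S̄ᵐ_w f is differentiable everywhere, with derivative (S̄ᵐ_w f)'(t) = (w/m) ∑_{k∈ℤ} f(k/w)[χ(wt−k+m/2) − χ(wt−k−m/2)], and |(S̄ᵐ_w f)'(t)| ≤ 2wM A_χ / m for all t ∈ ℝ. -/
open MeasureTheory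


noncomputable def avgKernel (χ : ℝ → ℝ) (m : ℕ) (t : ℝ) : ℝ :=
  (1 / (m : ℝ)) * ∫ v in (-((m : ℝ) / 2))..((m : ℝ) / 2), χ (t + v)

/-- The generalized sampling series based on the averaged kernel. -/
noncomputable def avgSamplingSeries (χ f : ℝ → ℝ) (m : ℕ) (w t : ℝ) : ℝ :=
  ∑' k : ℤ, f ((k : ℝ) / w) * avgKernel χ m (w * t - (k : ℝ))



section Aux

variable {χ : ℝ → ℝ} {A : ℝ}

lemma aux_chi_bound (habs : ∀ u : ℝ, Summable fun k : ℤ => |χ (u - k)|)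
    (hA : ∀ u : ℝ, ∑' k : ℤ, |χ (u - k)| ≤ A) (x : ℝ) : |χ x| ≤ A := by
  have h := Summable.le_tsum (habs x) 0 (fun j _ => abs_nonneg _)
  simpa using h.trans (hA x)

lemma aux_A_nonneg (habs : ∀ u : ℝ, Summable fun k : ℤ => |χ (u - k)|)
    (hA : ∀ u : ℝ, ∑' k : ℤ, |χ (u - k)| ≤ A) : 0 ≤ A :=
  (abs_nonneg _).trans (aux_chi_bound habs hA 0)

lemma aux_finsum_le (hcont : Continuous χ)
    (habs : ∀ u : ℝ, Summable fun k : ℤ => |χ (u - k)|)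
    (hA : ∀ u : ℝ, ∑' k : ℤ, |χ (u - k)| ≤ A)
    (x c d : ℝ) (hcd : c ≤ d) (F : Finset ℤ) :
    ∑ k ∈ F, ∫ s in c..d, |χ (x + s - (k : ℝ))| ≤ (d - c) * A := by
  have hci : ∀ k : ℤ, Continuous fun s : ℝ => |χ (x + s - (k : ℝ))| := by
    intro k; exact (hcont.comp (by continuity)).abs
  have hInt : ∀ k ∈ F, IntervalIntegrable (fun s => |χ (x + s - (k : ℝ))|) volume c d :=
    fun k _ => (hci k).intervalIntegrable c d
  rw [← intervalIntegral.integral_finset_sum hInt]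
  have hconstint : (∫ _s in c..d, A) = (d - c) * A := by
    simp [intervalIntegral.integral_const, smul_eq_mul]
  rw [← hconstint]
  apply intervalIntegral.integral_mono_on hcd
    ((continuous_finset_sum F (fun k _ => hci k)).intervalIntegrable c d)
    (intervalIntegrable_const)
  intro s _
  calc ∑ k ∈ F, |χ (x + s - (k : ℝ))| ≤ ∑' k : ℤ, |χ ((x + s) - (k : ℝ))| :=
        Summable.sum_le_tsum F (fun k _ => abs_nonneg _) (habs (x + s))
    _ ≤ A := hA (x + s)

lemma aux_summable_integral (hcont : Continuous χ)
    (habs : ∀ u : ℝ, Summable fun k : ℤ => |χ (u - k)|)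
    (hA : ∀ u : ℝ, ∑' k : ℤ, |χ (u - k)| ≤ A)
    (x c d : ℝ) (hcd : c ≤ d) :
    Summable (fun k : ℤ => ∫ s in c..d, |χ (x + s - (k : ℝ))|) :=
  summable_of_sum_le (fun k => intervalIntegral.integral_nonneg hcd (fun _ _ => abs_nonneg _))
    (aux_finsum_le hcont habs hA x c d hcd)

lemma avgKernel_eq (χ : ℝ → ℝ) (m : ℕ) (x : ℝ) :
    avgKernel χ m x = (1 / (m : ℝ)) * ∫ s in (x - (m : ℝ)/2)..(x + (m : ℝ)/2), χ s := by
  unfold avgKernel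
  rw [intervalIntegral.integral_comp_add_left (fun v => χ v) x]
  ring_nf


end Aux

section Aux2

variable {χ : ℝ → ℝ} {A : ℝ}

lemma abs_avgKernel_le (hcont : Continuous χ) (m : ℕ) (u : ℝ) (k : ℤ) :
    |avgKernel χ m (u - (k : ℝ))| ≤
      (1 / (m : ℝ)) * ∫ s in (-((m : ℝ)/2))..((m : ℝ)/2), |χ (u + s - (k : ℝ))| := by
  unfold avgKernel
  rw [abs_mul]
  have h2 : |∫ v in (-((m : ℝ)/2))..((m : ℝ)/2), χ (u - (k:ℝ) + v)|
      ≤ ∫ s in (-((m : ℝ)/2))..((m : ℝ)/2), |χ (u + s - (k : ℝ))| := by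
    have hle : -((m : ℝ)/2) ≤ (m : ℝ)/2 := by
      have : (0:ℝ) ≤ (m:ℝ)/2 := by positivity
      linarith
    refine (intervalIntegral.abs_integral_le_integral_abs hle).trans_eq ?_
    apply intervalIntegral.integral_congr
    intro s _
    congr 1
    ring
  calc |1 / (m:ℝ)| * |∫ v in (-((m : ℝ)/2))..((m : ℝ)/2), χ (u - (k:ℝ) + v)|
      ≤ |1 / (m:ℝ)| * ∫ s in (-((m : ℝ)/2))..((m : ℝ)/2), |χ (u + s - (k : ℝ))| :=
        mul_le_mul_of_nonneg_left h2 (abs_nonneg _)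
    _ = (1 / (m:ℝ)) * ∫ s in (-((m : ℝ)/2))..((m : ℝ)/2), |χ (u + s - (k : ℝ))| := by
        congr 1
        rw [abs_of_nonneg]
        positivity

lemma summable_series (hcont : Continuous χ)
    (habs : ∀ u : ℝ, Summable fun k : ℤ => |χ (u - k)|)
    (hA : ∀ u : ℝ, ∑' k : ℤ, |χ (u - k)| ≤ A)
    (f : ℝ → ℝ) (M : ℝ) (hf : ∀ x, |f x| ≤ M) (m : ℕ) (w u : ℝ) :
    Summable (fun k : ℤ => f ((k : ℝ)/w) * avgKernel χ m (u - (k : ℝ))) := by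
  have hM0 : 0 ≤ M := (abs_nonneg _).trans (hf 0)
  have hle : -((m : ℝ)/2) ≤ (m : ℝ)/2 := by
    have : (0:ℝ) ≤ (m:ℝ)/2 := by positivity
    linarith
  have hmaj : Summable (fun k : ℤ =>
      M * ((1 / (m : ℝ)) * ∫ s in (-((m : ℝ)/2))..((m : ℝ)/2), |χ (u + s - (k : ℝ))|)) :=
    ((aux_summable_integral hcont habs hA u _ _ hle).mul_left _).mul_left _
  apply Summable.of_abs
  apply Summable.of_nonneg_of_le (fun _ => abs_nonneg _) _ hmaj
  intro k
  rw [abs_mul]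
  exact mul_le_mul (hf _) (abs_avgKernel_le hcont m u k) (abs_nonneg _) hM0

lemma aux_incr_sum_le (f : ℝ → ℝ) (hBV : BoundedVariationOn f Set.univ)
    (w : ℝ) (hw : 0 < w) (n : ℕ) (a₀ : ℤ) :
    ∑ i ∈ Finset.range n, |f (((a₀ + i : ℤ) : ℝ)/w) - f (((a₀ + i - 1 : ℤ) : ℝ)/w)|
      ≤ (eVariationOn f Set.univ).toReal := by
  set u : ℕ → ℝ := fun i => ((a₀ - 1 + i : ℤ) : ℝ)/w with hu
  have hmono : Monotone u := by
    intro i j hij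
    simp only [hu]
    gcongr
  have h := eVariationOn.sum_le (f := f) (n := n) hmono (fun i => Set.mem_univ (u i))
  have hterm : ∀ i, edist (f (u (i+1))) (f (u i)) =
      ENNReal.ofReal |f (((a₀ + i : ℤ) : ℝ)/w) - f (((a₀ + i - 1 : ℤ) : ℝ)/w)| := by
    intro i
    have h1 : u (i+1) = ((a₀ + i : ℤ) : ℝ)/w := by
      simp only [hu]; congr 1; push_cast; ring
    have h2 : u i = ((a₀ + i - 1 : ℤ) : ℝ)/w := by
      simp only [hu]; congr 1; push_cast; ring
    rw [h1, h2, edist_dist, Real.dist_eq]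
  rw [Finset.sum_congr rfl (fun i _ => hterm i)] at h
  rw [← ENNReal.ofReal_sum_of_nonneg (fun i _ => abs_nonneg _)] at h
  exact (ENNReal.ofReal_le_iff_le_toReal hBV).mp h

lemma aux_summable_e (f : ℝ → ℝ) (hBV : BoundedVariationOn f Set.univ)
    (w : ℝ) (hw : 0 < w) :
    Summable (fun k : ℤ => |f ((k : ℝ)/w) - f (((k - 1 : ℤ) : ℝ)/w)|) := by
  apply summable_of_sum_le (c := (eVariationOn f Set.univ).toReal)
    (fun k => abs_nonneg _)
  intro F
  rcases F.eq_empty_or_nonempty with hF | hF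
  · simp [hF, ENNReal.toReal_nonneg]
  · set a₀ := F.min' hF with ha₀
    set b₀ := F.max' hF with hb₀
    set n : ℕ := (b₀ - a₀ + 1).toNat with hn
    have hsub : F ⊆ Finset.image (fun i : ℕ => a₀ + (i : ℤ)) (Finset.range n) := by
      intro k hk
      simp only [Finset.mem_image, Finset.mem_range]
      have h1 : a₀ ≤ k := F.min'_le k hk
      have h2 : k ≤ b₀ := F.le_max' k hk
      exact ⟨(k - a₀).toNat, by omega, by omega⟩
    calc ∑ k ∈ F, |f ((k : ℝ)/w) - f (((k - 1 : ℤ) : ℝ)/w)|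
        ≤ ∑ k ∈ Finset.image (fun i : ℕ => a₀ + (i : ℤ)) (Finset.range n),
            |f ((k : ℝ)/w) - f (((k - 1 : ℤ) : ℝ)/w)| :=
          Finset.sum_le_sum_of_subset_of_nonneg hsub (fun _ _ _ => abs_nonneg _)
      _ = ∑ i ∈ Finset.range n, |f (((a₀ + i : ℤ) : ℝ)/w) - f (((a₀ + i - 1 : ℤ) : ℝ)/w)| := by
          rw [Finset.sum_image (by intro x _ y _ h; have h' : a₀ + (x:ℤ) = a₀ + (y:ℤ) := h; omega)]
      _ ≤ (eVariationOn f Set.univ).toReal := aux_incr_sum_le f hBV w hw n a₀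

lemma aux_tele (f : ℝ → ℝ) (w : ℝ) (n : ℕ) (k : ℤ) :
    |f ((k : ℝ)/w) - f (((k - n : ℤ) : ℝ)/w)| ≤
      ∑ i ∈ Finset.range n, |f (((k - i : ℤ) : ℝ)/w) - f (((k - i - 1 : ℤ) : ℝ)/w)| := by
  induction n with
  | zero => simp
  | succ n ih =>
    rw [Finset.sum_range_succ]
    have hcast : ((k - (n + 1 : ℕ) : ℤ) : ℝ) = ((k - n - 1 : ℤ) : ℝ) := by push_cast; ring
    rw [hcast]
    calc |f ((k : ℝ)/w) - f (((k - n - 1 : ℤ) : ℝ)/w)|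
        ≤ |f ((k : ℝ)/w) - f (((k - n : ℤ) : ℝ)/w)|
          + |f (((k - n : ℤ) : ℝ)/w) - f (((k - n - 1 : ℤ) : ℝ)/w)| := abs_sub_le _ _ _
      _ ≤ _ := add_le_add ih le_rfl

lemma aux_summable_absd (f : ℝ → ℝ) (hBV : BoundedVariationOn f Set.univ)
    (w : ℝ) (hw : 0 < w) (m : ℕ) :
    Summable (fun k : ℤ => |f ((k : ℝ)/w) - f (((k - m : ℤ) : ℝ)/w)|) := by
  have he := aux_summable_e f hBV w hw
  have hmaj : Summable (fun k : ℤ =>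
      ∑ i ∈ Finset.range m, |f (((k - i : ℤ) : ℝ)/w) - f (((k - i - 1 : ℤ) : ℝ)/w)|) := by
    apply summable_sum
    intro i _
    have h : Summable ((fun k : ℤ => |f ((k : ℝ)/w) - f (((k - 1 : ℤ) : ℝ)/w)|)
        ∘ (Equiv.subRight (i : ℤ))) := ((Equiv.subRight (i : ℤ)).summable_iff).mpr he
    have heq : ((fun k : ℤ => |f ((k : ℝ)/w) - f (((k - 1 : ℤ) : ℝ)/w)|)
        ∘ (Equiv.subRight (i : ℤ)))
        = fun k : ℤ => |f (((k - i : ℤ) : ℝ)/w) - f (((k - i - 1 : ℤ) : ℝ)/w)| := rfl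
    rwa [heq] at h
  exact Summable.of_nonneg_of_le (fun _ => abs_nonneg _) (fun k => aux_tele f w m k) hmaj

end Aux2
section Aux3

variable {χ : ℝ → ℝ} {A : ℝ}

lemma aux_shift_sub (a p : ℤ → ℝ) (m : ℤ)
    (h1 : Summable fun k => a k * p k) (h2 : Summable fun k => a (k - m) * p k) :
    ∑' k : ℤ, a k * (p k - p (k + m)) = ∑' k : ℤ, (a k - a (k - m)) * p k := by
  have h3 : Summable fun k : ℤ => a k * p (k + m) := by
    have h := ((Equiv.addRight m).summable_iff).mpr h2
    have heq : ((fun k : ℤ => a (k - m) * p k) ∘ (Equiv.addRight m))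
        = fun k : ℤ => a (k + m - m) * p (k + m) := rfl
    rw [heq] at h
    simpa using h
  calc ∑' k : ℤ, a k * (p k - p (k + m))
      = ∑' k : ℤ, (a k * p k - a k * p (k + m)) := by
        apply tsum_congr; intro k; ring
    _ = (∑' k : ℤ, a k * p k) - ∑' k : ℤ, a k * p (k + m) := Summable.tsum_sub h1 h3
    _ = (∑' k : ℤ, a k * p k) - ∑' k : ℤ, a (k - m) * p k := by
        congr 1
        calc ∑' k : ℤ, a k * p (k + m) = ∑' k : ℤ, a (k + m - m) * p (k + m) := by
              apply tsum_congr; intro k; simp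
          _ = ∑' k : ℤ, a (k - m) * p k :=
              Equiv.tsum_eq (Equiv.addRight m) (fun k => a (k - m) * p k)
    _ = ∑' k : ℤ, (a k - a (k - m)) * p k := by
        rw [← Summable.tsum_sub h1 h2]
        apply tsum_congr; intro k; ring

lemma aux_summable_mul_chi
    (habs : ∀ u : ℝ, Summable fun k : ℤ => |χ (u - k)|)
    (M : ℝ) (b : ℤ → ℝ) (hb : ∀ k, |b k| ≤ M) (x : ℝ) :
    Summable fun k : ℤ => b k * χ (x - (k : ℝ)) := by
  have hM0 : 0 ≤ M := (abs_nonneg _).trans (hb 0)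
  apply Summable.of_abs
  refine Summable.of_nonneg_of_le (fun _ => abs_nonneg _) ?_ ((habs x).mul_left M)
  intro k
  rw [abs_mul]
  exact mul_le_mul (hb k) le_rfl (abs_nonneg _) hM0

lemma aux_abs_intervalIntegral_le (g : ℝ → ℝ) (η : ℝ) :
    |∫ s in (0:ℝ)..η, g s| ≤ ∫ s in (min 0 η)..(max 0 η), |g s| := by
  rcases le_total 0 η with h | h
  · rw [min_eq_left h, max_eq_right h]
    exact intervalIntegral.abs_integral_le_integral_abs h
  · rw [min_eq_right h, max_eq_left h, intervalIntegral.integral_symm, abs_neg]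
    exact intervalIntegral.abs_integral_le_integral_abs h

lemma aux_summable_mul_c (hcont : Continuous χ)
    (habs : ∀ u : ℝ, Summable fun k : ℤ => |χ (u - k)|)
    (hA : ∀ u : ℝ, ∑' k : ℤ, |χ (u - k)| ≤ A)
    (M : ℝ) (b : ℤ → ℝ) (hb : ∀ k, |b k| ≤ M) (x₀ η : ℝ) :
    Summable fun k : ℤ => b k * ∫ s in (0:ℝ)..η, χ (x₀ + s - (k : ℝ)) := by
  have hM0 : 0 ≤ M := (abs_nonneg _).trans (hb 0)
  apply Summable.of_abs
  refine Summable.of_nonneg_of_le (fun _ => abs_nonneg _) ?_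
    ((aux_summable_integral hcont habs hA x₀ (min 0 η) (max 0 η) min_le_max).mul_left M)
  intro k
  rw [abs_mul]
  exact mul_le_mul (hb k) (aux_abs_intervalIntegral_le _ η) (abs_nonneg _) hM0

lemma aux_kernel_diff (hcont : Continuous χ) (m : ℕ) (x x' : ℝ) (k : ℤ) :
    avgKernel χ m (x' - (k : ℝ)) - avgKernel χ m (x - (k : ℝ))
      = (1/(m : ℝ)) * ((∫ s in (0:ℝ)..(x' - x), χ ((x + (m : ℝ)/2) + s - (k : ℝ)))
          - ∫ s in (0:ℝ)..(x' - x), χ ((x + (m : ℝ)/2) + s - ((k + (m:ℤ) : ℤ) : ℝ))) := by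
  have hI : ∀ p q : ℝ, IntervalIntegrable χ MeasureTheory.volume p q :=
    fun p q => hcont.intervalIntegrable p q
  have hint1 : (∫ s in (0:ℝ)..(x' - x), χ ((x + (m : ℝ)/2) + s - (k : ℝ)))
      = ∫ y in (x - (k:ℝ) + (m:ℝ)/2)..(x' - (k:ℝ) + (m:ℝ)/2), χ y := by
    have e : ∀ s : ℝ, (x + (m : ℝ)/2) + s - (k : ℝ) = (x - (k:ℝ) + (m:ℝ)/2) + s := by
      intro s; ring
    rw [intervalIntegral.integral_congr (g := fun s => χ ((x - (k:ℝ) + (m:ℝ)/2) + s))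
      (fun s _ => by rw [e s])]
    rw [intervalIntegral.integral_comp_add_left χ (x - (k:ℝ) + (m:ℝ)/2)]
    congr 1 <;> ring
  have hint2 : (∫ s in (0:ℝ)..(x' - x), χ ((x + (m : ℝ)/2) + s - ((k + (m:ℤ) : ℤ) : ℝ)))
      = ∫ y in (x - (k:ℝ) - (m:ℝ)/2)..(x' - (k:ℝ) - (m:ℝ)/2), χ y := by
    have e : ∀ s : ℝ, (x + (m : ℝ)/2) + s - ((k + (m:ℤ) : ℤ) : ℝ)
        = (x - (k:ℝ) - (m:ℝ)/2) + s := by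
      intro s; push_cast; ring
    rw [intervalIntegral.integral_congr (g := fun s => χ ((x - (k:ℝ) - (m:ℝ)/2) + s))
      (fun s _ => by rw [e s])]
    rw [intervalIntegral.integral_comp_add_left χ (x - (k:ℝ) - (m:ℝ)/2)]
    congr 1 <;> ring
  rw [avgKernel_eq, avgKernel_eq, hint1, hint2]
  have e1 := intervalIntegral.integral_add_adjacent_intervals
    (hI (x - (k:ℝ) - (m:ℝ)/2) (x - (k:ℝ) + (m:ℝ)/2))
    (hI (x - (k:ℝ) + (m:ℝ)/2) (x' - (k:ℝ) + (m:ℝ)/2))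
  have e2 := intervalIntegral.integral_add_adjacent_intervals
    (hI (x - (k:ℝ) - (m:ℝ)/2) (x' - (k:ℝ) - (m:ℝ)/2))
    (hI (x' - (k:ℝ) - (m:ℝ)/2) (x' - (k:ℝ) + (m:ℝ)/2))
  have h4 : (∫ y in (x' - (k:ℝ) - (m:ℝ)/2)..(x' - (k:ℝ) + (m:ℝ)/2), χ y)
      - (∫ y in (x - (k:ℝ) - (m:ℝ)/2)..(x - (k:ℝ) + (m:ℝ)/2), χ y)
      = (∫ y in (x - (k:ℝ) + (m:ℝ)/2)..(x' - (k:ℝ) + (m:ℝ)/2), χ y)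
        - ∫ y in (x - (k:ℝ) - (m:ℝ)/2)..(x' - (k:ℝ) - (m:ℝ)/2), χ y := by linarith [e1, e2]
  rw [← mul_sub, h4]

end Aux3
section Aux4

variable {χ : ℝ → ℝ} {A : ℝ}

lemma aux_key (hcont : Continuous χ)
    (habs : ∀ u : ℝ, Summable fun k : ℤ => |χ (u - k)|)
    (hA : ∀ u : ℝ, ∑' k : ℤ, |χ (u - k)| ≤ A)
    (f : ℝ → ℝ) (M : ℝ) (hf : ∀ x, |f x| ≤ M)
    (m : ℕ) (w t t' : ℝ) :
    avgSamplingSeries χ f m w t' - avgSamplingSeries χ f m w t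
      = (1/(m:ℝ)) * ∑' k : ℤ, (f ((k:ℝ)/w) - f (((k - (m:ℤ) : ℤ):ℝ)/w))
          * ∫ s in (0:ℝ)..(w*t' - w*t), χ ((w*t + (m:ℝ)/2) + s - (k:ℝ)) := by
  unfold avgSamplingSeries
  have h1 := summable_series hcont habs hA f M hf m w (w*t')
  have h0 := summable_series hcont habs hA f M hf m w (w*t)
  rw [← Summable.tsum_sub h1 h0]
  have step2 : ∀ k : ℤ,
      f ((k:ℝ)/w) * avgKernel χ m (w*t' - (k:ℝ)) - f ((k:ℝ)/w) * avgKernel χ m (w*t - (k:ℝ))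
      = (1/(m:ℝ)) * (f ((k:ℝ)/w) *
          ((∫ s in (0:ℝ)..(w*t' - w*t), χ ((w*t + (m:ℝ)/2) + s - (k:ℝ)))
            - ∫ s in (0:ℝ)..(w*t' - w*t), χ ((w*t + (m:ℝ)/2) + s - ((k + (m:ℤ) : ℤ):ℝ)))) := by
    intro k
    rw [← mul_sub, aux_kernel_diff hcont m (w*t) (w*t') k]
    ring
  rw [tsum_congr step2, tsum_mul_left]
  congr 1
  have hsum1 : Summable fun k : ℤ =>
      f ((k:ℝ)/w) * ∫ s in (0:ℝ)..(w*t' - w*t), χ ((w*t + (m:ℝ)/2) + s - (k:ℝ)) :=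
    aux_summable_mul_c hcont habs hA M _ (fun k => hf _) _ _
  have hsum2 : Summable fun k : ℤ =>
      f (((k - (m:ℤ) : ℤ):ℝ)/w) * ∫ s in (0:ℝ)..(w*t' - w*t), χ ((w*t + (m:ℝ)/2) + s - (k:ℝ)) :=
    aux_summable_mul_c hcont habs hA M _ (fun k => hf _) _ _
  exact aux_shift_sub (fun k => f ((k:ℝ)/w))
    (fun k => ∫ s in (0:ℝ)..(w*t' - w*t), χ ((w*t + (m:ℝ)/2) + s - (k:ℝ))) (m:ℤ) hsum1 hsum2

end Aux4
lemma aux_mem_uIoc_abs_le {s η : ℝ} (hs : s ∈ Set.uIoc 0 η) : |s| ≤ |η| := by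
  rcases le_total 0 η with h | h
  · rw [Set.uIoc_of_le h] at hs
    rw [abs_of_pos hs.1, abs_of_nonneg h]
    exact hs.2
  · rw [Set.uIoc_of_ge h] at hs
    rw [abs_of_nonpos hs.2, abs_of_nonpos h]
    linarith [hs.1]

lemma aux_abs_tsum_le {g : ℤ → ℝ} (h : Summable fun k => |g k|) :
    |∑' k : ℤ, g k| ≤ ∑' k : ℤ, |g k| := by
  have := norm_tsum_le_tsum_norm (f := g) (by simpa using h)
  simpa using this

section Aux5

variable {χ : ℝ → ℝ} {A : ℝ}

lemma aux_deriv (hcont : Continuous χ)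
    (habs : ∀ u : ℝ, Summable fun k : ℤ => |χ (u - k)|)
    (hA : ∀ u : ℝ, ∑' k : ℤ, |χ (u - k)| ≤ A)
    (f : ℝ → ℝ) (M : ℝ) (hf : ∀ x : ℝ, |f x| ≤ M)
    (hBV : BoundedVariationOn f Set.univ)
    (m : ℕ) (hm : 1 ≤ m) (w : ℝ) (hw : 0 < w) (t : ℝ)
    (d : ℤ → ℝ) (hd : ∀ k : ℤ, d k = f ((k:ℝ)/w) - f (((k - (m:ℤ) : ℤ):ℝ)/w)) :
    HasDerivAt (avgSamplingSeries χ f m w)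
      ((w/(m:ℝ)) * ∑' k : ℤ, d k * χ ((w*t + (m:ℝ)/2) - (k:ℝ))) t := by
  have hM0 : 0 ≤ M := (abs_nonneg _).trans (hf 0)
  have hA0 : 0 ≤ A := aux_A_nonneg habs hA
  have hmR : (0:ℝ) < (m:ℝ) := by exact_mod_cast hm
  have hdbound : ∀ k : ℤ, |d k| ≤ M + M := by
    intro k; rw [hd k]; exact (abs_sub _ _).trans (add_le_add (hf _) (hf _))
  have hd_abs : Summable fun k : ℤ => |d k| := by
    simp only [hd]
    exact aux_summable_absd f hBV w hw m
  set x₀ : ℝ := w*t + (m:ℝ)/2 with hx₀def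
  set Dp : ℝ := ∑' k : ℤ, d k * χ (x₀ - (k:ℝ)) with hDpdef
  rw [hasDerivAt_iff_isLittleO, Asymptotics.isLittleO_iff]
  intro ε hε
  set Sd : ℝ := ∑' k : ℤ, |d k| with hSddef
  have hSd0 : 0 ≤ Sd := tsum_nonneg (fun _ => abs_nonneg _)
  set δ₁ : ℝ := (m:ℝ)*ε/(8*w*(A+1)) with hδ₁def
  have hδ₁ : 0 < δ₁ := by positivity
  set ε₂ : ℝ := (m:ℝ)*ε/(4*w*(Sd+1)) with hε₂def
  have hε₂ : 0 < ε₂ := by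
    have : 0 < Sd + 1 := by linarith
    positivity
  obtain ⟨F, hF⟩ := hd_abs.tsum_vanishing (Metric.ball_mem_nhds (0:ℝ) hδ₁)
  have htail : (∑' k : {k : ℤ // k ∉ F}, |d (k:ℤ)|) ≤ δ₁ := by
    have hdisj : Disjoint {k : ℤ | k ∉ F} (↑F : Set ℤ) := by
      rw [Set.disjoint_left]; intro a ha; simpa using ha
    have h := hF {k : ℤ | k ∉ F} hdisj
    rw [Metric.mem_ball, dist_zero_right, Real.norm_eq_abs] at h
    exact (le_abs_self _).trans h.le
  have hev : ∀ᶠ η in nhds (0:ℝ), ∀ k ∈ F, ∀ s ∈ Set.uIoc (0:ℝ) η,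
      |χ (x₀ + s - (k:ℝ)) - χ (x₀ - (k:ℝ))| ≤ ε₂ := by
    rw [Filter.eventually_all_finset]
    intro k _
    have hc : ContinuousAt χ (x₀ - (k:ℝ)) := hcont.continuousAt
    rcases Metric.continuousAt_iff.mp hc ε₂ hε₂ with ⟨δ, hδpos, hδ⟩
    rw [Metric.eventually_nhds_iff]
    refine ⟨δ, hδpos, fun η hη s hs => ?_⟩
    have hs' : |s| ≤ |η| := aux_mem_uIoc_abs_le hs
    have hη' : |η| < δ := by
      rw [Real.dist_eq, sub_zero] at hη; exact hη
    have hdist : dist (x₀ + s - (k:ℝ)) (x₀ - (k:ℝ)) < δ := by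
      rw [Real.dist_eq]
      have e : (x₀ + s - (k:ℝ)) - (x₀ - (k:ℝ)) = s := by ring
      rw [e]
      exact lt_of_le_of_lt hs' hη'
    have := hδ hdist
    rw [Real.dist_eq] at this
    exact this.le
  have hηto : Filter.Tendsto (fun t' : ℝ => w*t' - w*t) (nhds t) (nhds 0) := by
    have hc : Continuous fun t' : ℝ => w*t' - w*t := by continuity
    have h0 : w*t - w*t = 0 := by ring
    simpa [h0] using hc.tendsto t
  filter_upwards [hηto.eventually hev] with t' hsmall
  set η : ℝ := w * t' - w * t with hηdef
  -- key identity
  have hkey : avgSamplingSeries χ f m w t' - avgSamplingSeries χ f m w t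
      = (1/(m:ℝ)) * ∑' k : ℤ, d k * ∫ s in (0:ℝ)..η, χ (x₀ + s - (k:ℝ)) := by
    rw [aux_key hcont habs hA f M hf m w t t']
    congr 1
    apply tsum_congr
    intro k
    rw [hd k]
  have hsum_dc : Summable fun k : ℤ => d k * ∫ s in (0:ℝ)..η, χ (x₀ + s - (k:ℝ)) :=
    aux_summable_mul_c hcont habs hA (M + M) d hdbound x₀ η
  have hsum_dχ : Summable fun k : ℤ => d k * χ (x₀ - (k:ℝ)) :=
    aux_summable_mul_chi habs (M + M) d hdbound x₀
  have main_eq : avgSamplingSeries χ f m w t' - avgSamplingSeries χ f m w t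
        - (t' - t) • ((w/(m:ℝ)) * Dp)
      = (1/(m:ℝ)) * ∑' k : ℤ,
          d k * ((∫ s in (0:ℝ)..η, χ (x₀ + s - (k:ℝ))) - η * χ (x₀ - (k:ℝ))) := by
    rw [hkey, smul_eq_mul]
    have h1 : (t' - t) * ((w/(m:ℝ)) * Dp) = (1/(m:ℝ)) * (η * Dp) := by
      rw [hηdef]; ring
    rw [h1, hDpdef, ← mul_sub]
    congr 1
    rw [← tsum_mul_left (a := η), ← Summable.tsum_sub hsum_dc (hsum_dχ.mul_left η)]
    apply tsum_congr
    intro k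
    ring
  have hRk : ∀ k : ℤ, (∫ s in (0:ℝ)..η, χ (x₀ + s - (k:ℝ))) - η * χ (x₀ - (k:ℝ))
      = ∫ s in (0:ℝ)..η, (χ (x₀ + s - (k:ℝ)) - χ (x₀ - (k:ℝ))) := by
    intro k
    have hcint : Continuous fun s : ℝ => χ (x₀ + s - (k:ℝ)) := by fun_prop
    rw [intervalIntegral.integral_sub (hcint.intervalIntegrable _ _) intervalIntegrable_const]
    congr 1
    rw [intervalIntegral.integral_const]
    simp [smul_eq_mul]
  have hC_nonneg : ∀ k : ℤ, 0 ≤ (if k ∈ F then ε₂ else 2*A) := by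
    intro k; by_cases h : k ∈ F <;> simp [h, hε₂.le] <;> positivity
  have hC_le : ∀ k : ℤ, (if k ∈ F then ε₂ else 2*A) ≤ ε₂ + 2*A := by
    intro k; by_cases h : k ∈ F <;> simp [h] <;> linarith
  have hRbound : ∀ k : ℤ,
      |d k * ((∫ s in (0:ℝ)..η, χ (x₀ + s - (k:ℝ))) - η * χ (x₀ - (k:ℝ)))|
      ≤ |d k| * ((if k ∈ F then ε₂ else 2*A) * |η|) := by
    intro k
    rw [abs_mul]
    refine mul_le_mul_of_nonneg_left ?_ (abs_nonneg _)
    rw [hRk k]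
    have hb : ∀ s ∈ Set.uIoc (0:ℝ) η,
        ‖χ (x₀ + s - (k:ℝ)) - χ (x₀ - (k:ℝ))‖ ≤ (if k ∈ F then ε₂ else 2*A) := by
      intro s hs
      by_cases hkF : k ∈ F
      · simp only [hkF, if_true]
        rw [Real.norm_eq_abs]
        exact hsmall k hkF s hs
      · simp only [hkF, if_false]
        rw [Real.norm_eq_abs]
        have h1 := aux_chi_bound habs hA (x₀ + s - (k:ℝ))
        have h2 := aux_chi_bound habs hA (x₀ - (k:ℝ))
        calc |χ (x₀ + s - (k:ℝ)) - χ (x₀ - (k:ℝ))|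
            ≤ |χ (x₀ + s - (k:ℝ))| + |χ (x₀ - (k:ℝ))| := abs_sub _ _
          _ ≤ 2*A := by linarith
    have := intervalIntegral.norm_integral_le_of_norm_le_const hb
    rw [Real.norm_eq_abs] at this
    simpa using this
  have hsumR : Summable fun k : ℤ => |d k| * ((if k ∈ F then ε₂ else 2*A) * |η|) := by
    refine Summable.of_nonneg_of_le
      (fun k => mul_nonneg (abs_nonneg _) (mul_nonneg (hC_nonneg k) (abs_nonneg _)))
      (fun k => ?_) (hd_abs.mul_right ((ε₂ + 2*A) * |η|))
    exact mul_le_mul_of_nonneg_left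
      (mul_le_mul_of_nonneg_right (hC_le k) (abs_nonneg _)) (abs_nonneg _)
  have habsR : Summable fun k : ℤ =>
      |d k * ((∫ s in (0:ℝ)..η, χ (x₀ + s - (k:ℝ))) - η * χ (x₀ - (k:ℝ)))| :=
    Summable.of_nonneg_of_le (fun _ => abs_nonneg _) hRbound hsumR
  rw [Real.norm_eq_abs, main_eq, abs_mul,
    abs_of_nonneg (show (0:ℝ) ≤ 1/(m:ℝ) by positivity)]
  have step1 := aux_abs_tsum_le habsR
  have step2 := Summable.tsum_le_tsum hRbound habsR hsumR
  have step3 : (∑' k : ℤ, |d k| * ((if k ∈ F then ε₂ else 2*A) * |η|))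
      = |η| * ∑' k : ℤ, |d k| * (if k ∈ F then ε₂ else 2*A) := by
    rw [← tsum_mul_left]
    apply tsum_congr
    intro k
    ring
  have hsum_dC : Summable fun k : ℤ => |d k| * (if k ∈ F then ε₂ else 2*A) :=
    Summable.of_nonneg_of_le
      (fun k => mul_nonneg (abs_nonneg _) (hC_nonneg k))
      (fun k => mul_le_mul_of_nonneg_left (hC_le k) (abs_nonneg _))
      (hd_abs.mul_right (ε₂ + 2*A))
  have step4 : (∑' k : ℤ, |d k| * (if k ∈ F then ε₂ else 2*A)) ≤ ε₂ * Sd + 2*A*δ₁ := by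
    rw [← Summable.sum_add_tsum_subtype_compl hsum_dC F]
    refine add_le_add ?_ ?_
    · calc ∑ k ∈ F, |d k| * (if k ∈ F then ε₂ else 2*A)
          = ∑ k ∈ F, |d k| * ε₂ := Finset.sum_congr rfl (fun k hk => by rw [if_pos hk])
        _ = (∑ k ∈ F, |d k|) * ε₂ := by rw [Finset.sum_mul]
        _ ≤ Sd * ε₂ := mul_le_mul_of_nonneg_right
            (Summable.sum_le_tsum F (fun i _ => abs_nonneg _) hd_abs) hε₂.le
        _ = ε₂ * Sd := mul_comm _ _
    · calc (∑' k : {x : ℤ // x ∉ F}, |d (k:ℤ)| * (if (k:ℤ) ∈ F then ε₂ else 2*A))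
          = ∑' k : {x : ℤ // x ∉ F}, |d (k:ℤ)| * (2*A) :=
            tsum_congr (fun k => by rw [if_neg k.prop])
        _ = (∑' k : {x : ℤ // x ∉ F}, |d (k:ℤ)|) * (2*A) := tsum_mul_right
        _ ≤ δ₁ * (2*A) := mul_le_mul_of_nonneg_right htail (by positivity)
        _ = 2*A*δ₁ := by ring
  -- numeric endgame
  clear_value Sd δ₁ ε₂
  have hn1 : ε₂ * Sd ≤ (m:ℝ)*ε/(4*w) := by
    have e1 : ε₂ * (Sd+1) = (m:ℝ)*ε/(4*w) := by
      rw [hε₂def]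
      field_simp
    have expand : ε₂*(Sd+1) = ε₂*Sd + ε₂ := by ring
    linarith [hε₂.le]
  have hn2 : 2*A*δ₁ ≤ (m:ℝ)*ε/(4*w) := by
    have e2 : δ₁ * (A+1) = (m:ℝ)*ε/(8*w) := by
      rw [hδ₁def]
      field_simp
    have expand : δ₁*(A+1) = δ₁*A + δ₁ := by ring
    have e3 : (m:ℝ)*ε/(4*w) = 2*((m:ℝ)*ε/(8*w)) := by ring
    have e4 : 2*A*δ₁ = 2*(δ₁*A) := by ring
    linarith [hδ₁.le]
  have hη_abs : |η| = w * |t' - t| := by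
    rw [hηdef, ← mul_sub, abs_mul, abs_of_pos hw]
  have hfinal : (1/(m:ℝ)) * (|η| * (ε₂ * Sd + 2*A*δ₁)) ≤ ε * ‖t' - t‖ := by
    rw [Real.norm_eq_abs, hη_abs]
    have hnum : (1/(m:ℝ)) * (w * (ε₂ * Sd + 2*A*δ₁)) ≤ ε := by
      have h3 : (1/(m:ℝ)) * (w * ((m:ℝ)*ε/(4*w) + (m:ℝ)*ε/(4*w))) = ε/2 := by
        field_simp
        ring
      have h4 : (1/(m:ℝ)) * (w * (ε₂ * Sd + 2*A*δ₁))
          ≤ (1/(m:ℝ)) * (w * ((m:ℝ)*ε/(4*w) + (m:ℝ)*ε/(4*w))) := by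
        gcongr
      rw [h3] at h4
      linarith
    calc (1/(m:ℝ)) * (w * |t' - t| * (ε₂ * Sd + 2*A*δ₁))
        = |t' - t| * ((1/(m:ℝ)) * (w * (ε₂ * Sd + 2*A*δ₁))) := by ring
      _ ≤ |t' - t| * ε := mul_le_mul_of_nonneg_left hnum (abs_nonneg _)
      _ = ε * |t' - t| := by ring
  calc (1/(m:ℝ)) * |∑' k : ℤ,
        d k * ((∫ s in (0:ℝ)..η, χ (x₀ + s - (k:ℝ))) - η * χ (x₀ - (k:ℝ)))|
      ≤ (1/(m:ℝ)) * (|η| * (ε₂ * Sd + 2*A*δ₁)) := by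
        refine mul_le_mul_of_nonneg_left ?_ (by positivity)
        refine (step1.trans step2).trans ?_
        rw [step3]
        exact mul_le_mul_of_nonneg_left step4 (abs_nonneg _)
    _ ≤ ε * ‖t' - t‖ := hfinal

end Aux5

theorem stmt5 (χ f : ℝ → ℝ) (M : ℝ)
    (hBV : BoundedVariationOn f Set.univ) (hf : ∀ x : ℝ, |f x| ≤ M)
    (hcont : Continuous χ) (A : ℝ)
    (habs : ∀ u : ℝ, Summable fun k : ℤ => |χ (u - k)|)
    (hA : ∀ u : ℝ, ∑' k : ℤ, |χ (u - k)| ≤ A)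
    (m : ℕ) (hm : 1 ≤ m) (w : ℝ) (hw : 0 < w) :
    ∀ t : ℝ,
      HasDerivAt (avgSamplingSeries χ f m w)
        ((w / (m : ℝ)) * ∑' k : ℤ, f ((k : ℝ) / w) *
          (χ (w * t - (k : ℝ) + (m : ℝ) / 2) - χ (w * t - (k : ℝ) - (m : ℝ) / 2))) t ∧
      |(w / (m : ℝ)) * ∑' k : ℤ, f ((k : ℝ) / w) *
          (χ (w * t - (k : ℝ) + (m : ℝ) / 2) - χ (w * t - (k : ℝ) - (m : ℝ) / 2))|
        ≤ 2 * w * M * A / (m : ℝ) := by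
  have hM0 : 0 ≤ M := (abs_nonneg _).trans (hf 0)
  have hA0 : 0 ≤ A := aux_A_nonneg habs hA
  have hmR : (0:ℝ) < (m:ℝ) := by exact_mod_cast hm
  intro t
  constructor
  · -- derivative
    -- rewrite the claimed sum via summation by parts
    have hT : (∑' k : ℤ, f ((k : ℝ) / w) *
          (χ (w * t - (k : ℝ) + (m : ℝ) / 2) - χ (w * t - (k : ℝ) - (m : ℝ) / 2)))
        = ∑' k : ℤ, (f ((k:ℝ)/w) - f (((k - (m:ℤ) : ℤ):ℝ)/w)) * χ ((w*t + (m:ℝ)/2) - (k:ℝ)) := by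
      have h1 : Summable fun k : ℤ => f ((k:ℝ)/w) * χ ((w*t + (m:ℝ)/2) - (k:ℝ)) :=
        aux_summable_mul_chi habs M _ (fun k => hf _) _
      have h2 : Summable fun k : ℤ => f (((k - (m:ℤ) : ℤ):ℝ)/w) * χ ((w*t + (m:ℝ)/2) - (k:ℝ)) :=
        aux_summable_mul_chi habs M _ (fun k => hf _) _
      rw [← aux_shift_sub (fun k => f ((k:ℝ)/w))
        (fun k => χ ((w*t + (m:ℝ)/2) - (k:ℝ))) (m:ℤ) h1 h2]
      apply tsum_congr
      intro k
      have e1 : w * t - (k:ℝ) + (m:ℝ)/2 = (w*t + (m:ℝ)/2) - (k:ℝ) := by ring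
      have e2 : w * t - (k:ℝ) - (m:ℝ)/2 = (w*t + (m:ℝ)/2) - ((k + (m:ℤ) : ℤ):ℝ) := by
        push_cast; ring
      rw [e1, e2]
    rw [hT]
    exact aux_deriv hcont habs hA f M hf hBV m hm w hw t _ (fun k => rfl)
  · -- bound
    have hs1 : Summable fun k : ℤ => |χ ((w*t + (m:ℝ)/2) - (k:ℝ))| := habs _
    have hs2 : Summable fun k : ℤ => |χ ((w*t - (m:ℝ)/2) - (k:ℝ))| := habs _
    have hmaj : Summable fun k : ℤ =>
        M * (|χ ((w*t + (m:ℝ)/2) - (k:ℝ))| + |χ ((w*t - (m:ℝ)/2) - (k:ℝ))|) :=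
      (hs1.add hs2).mul_left M
    have hterm : ∀ k : ℤ, |f ((k : ℝ) / w) *
          (χ (w * t - (k : ℝ) + (m : ℝ) / 2) - χ (w * t - (k : ℝ) - (m : ℝ) / 2))|
        ≤ M * (|χ ((w*t + (m:ℝ)/2) - (k:ℝ))| + |χ ((w*t - (m:ℝ)/2) - (k:ℝ))|) := by
      intro k
      rw [abs_mul]
      refine mul_le_mul (hf _) ?_ (abs_nonneg _) hM0
      have e1 : w * t - (k:ℝ) + (m:ℝ)/2 = (w*t + (m:ℝ)/2) - (k:ℝ) := by ring
      have e2 : w * t - (k:ℝ) - (m:ℝ)/2 = (w*t - (m:ℝ)/2) - (k:ℝ) := by ring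
      rw [e1, e2]
      exact abs_sub _ _
    have habs_term : Summable fun k : ℤ => |f ((k : ℝ) / w) *
        (χ (w * t - (k : ℝ) + (m : ℝ) / 2) - χ (w * t - (k : ℝ) - (m : ℝ) / 2))| :=
      Summable.of_nonneg_of_le (fun _ => abs_nonneg _) hterm hmaj
    rw [abs_mul, abs_of_nonneg (show (0:ℝ) ≤ w/(m:ℝ) by positivity)]
    have h2 : |∑' k : ℤ, f ((k : ℝ) / w) *
          (χ (w * t - (k : ℝ) + (m : ℝ) / 2) - χ (w * t - (k : ℝ) - (m : ℝ) / 2))|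
        ≤ ∑' k : ℤ, |f ((k : ℝ) / w) *
          (χ (w * t - (k : ℝ) + (m : ℝ) / 2) - χ (w * t - (k : ℝ) - (m : ℝ) / 2))| := by
      have := norm_tsum_le_tsum_norm (f := fun k : ℤ => f ((k : ℝ) / w) *
        (χ (w * t - (k : ℝ) + (m : ℝ) / 2) - χ (w * t - (k : ℝ) - (m : ℝ) / 2)))
        (by simpa [abs_mul] using habs_term)
      simpa [abs_mul] using this
    have h3 : (∑' k : ℤ, |f ((k : ℝ) / w) *
          (χ (w * t - (k : ℝ) + (m : ℝ) / 2) - χ (w * t - (k : ℝ) - (m : ℝ) / 2))|)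
        ≤ M * (A + A) := by
      refine (Summable.tsum_le_tsum hterm habs_term hmaj).trans ?_
      rw [tsum_mul_left, Summable.tsum_add hs1 hs2]
      exact mul_le_mul_of_nonneg_left (add_le_add (hA _) (hA _)) hM0
    calc w/(m:ℝ) * |∑' k : ℤ, f ((k : ℝ) / w) *
          (χ (w * t - (k : ℝ) + (m : ℝ) / 2) - χ (w * t - (k : ℝ) - (m : ℝ) / 2))|
        ≤ w/(m:ℝ) * (M * (A + A)) :=
          mul_le_mul_of_nonneg_left (h2.trans h3) (by positivity)
      _ = 2 * w * M * A / (m:ℝ) := by ring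
end

section
/- Under the hypotheses on f and χ, the derivative of the averaged sampling series can be rewritten as a finite-difference sum: (S̄ᵐ_w f)'(t) = (w/m) ∑_{k∈ℤ} [f(k/w) − f((k−m)/w)] χ(wt − k + m/2) for all t ∈ ℝ. -/
open MeasureTheory

private lemma sum_abs_diff_le (f : ℝ → ℝ) (hBV : BoundedVariationOn f Set.univ) {w : ℝ} (hw : 0 < w) (s : Finset ℤ) :
    ∑ k ∈ s, |f ((k : ℝ) / w) - f (((k : ℝ) - 1) / w)| ≤ (eVariationOn f Set.univ).toReal := by
  classical
  rcases s.eq_empty_or_nonempty with rfl | hne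
  · simp [ENNReal.toReal_nonneg]
  · set a := s.min' hne with ha
    set b := s.max' hne with hb
    have hsub : s ⊆ Finset.Icc a b := fun k hk =>
      Finset.mem_Icc.2 ⟨Finset.min'_le _ _ hk, Finset.le_max' _ _ hk⟩
    have h1 : ∑ k ∈ s, |f ((k : ℝ) / w) - f (((k : ℝ) - 1) / w)|
        ≤ ∑ k ∈ Finset.Icc a b, |f ((k : ℝ) / w) - f (((k : ℝ) - 1) / w)| :=
      Finset.sum_le_sum_of_subset_of_nonneg hsub (fun _ _ _ => abs_nonneg _)
    set n : ℕ := (b + 1 - a).toNat with hn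
    set u : ℕ → ℝ := (fun i => ((a - 1 + (i : ℤ) : ℤ) : ℝ) / w) with hu'
    have hu : Monotone u := by
      intro i j hij
      have h2 : ((a - 1 + (i : ℤ) : ℤ) : ℝ) ≤ ((a - 1 + (j : ℤ) : ℤ) : ℝ) := by
        exact_mod_cast add_le_add_right (by exact_mod_cast hij) _
      exact div_le_div_of_nonneg_right h2 hw.le
    have hkey := eVariationOn.sum_le (f := f) (n := n) hu (fun i => Set.mem_univ (u i))
    have hEdist : ∀ i : ℕ, edist (f (u (i + 1))) (f (u i))
        = ENNReal.ofReal |f (((a + (i : ℤ) : ℤ) : ℝ) / w)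
            - f ((((a + (i : ℤ) : ℤ) : ℝ) - 1) / w)| := by
      intro i
      have e1 : u (i + 1) = ((a + (i : ℤ) : ℤ) : ℝ) / w := by
        simp only [hu']; push_cast; ring
      have e2 : u i = (((a + (i : ℤ) : ℤ) : ℝ) - 1) / w := by
        simp only [hu']; push_cast; ring
      rw [edist_dist, Real.dist_eq, e1, e2]
    simp only [hEdist] at hkey
    have hIcc : ∑ k ∈ Finset.Icc a b,
          ENNReal.ofReal |f ((k : ℝ) / w) - f (((k : ℝ) - 1) / w)|
        = ∑ i ∈ Finset.range n,
          ENNReal.ofReal |f (((a + (i : ℤ) : ℤ) : ℝ) / w)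
            - f ((((a + (i : ℤ) : ℤ) : ℝ) - 1) / w)| := by
      refine Finset.sum_nbij' (i := fun k => (k - a).toNat) (j := fun i => a + (i : ℤ))
        ?_ ?_ ?_ ?_ ?_
      · intro k hk
        rw [Finset.mem_Icc] at hk
        rw [Finset.mem_range]
        omega
      · intro i hi
        rw [Finset.mem_range] at hi
        rw [Finset.mem_Icc]
        omega
      · intro k hk
        rw [Finset.mem_Icc] at hk
        omega
      · intro i _
        omega
      · intro k hk
        rw [Finset.mem_Icc] at hk
        have : (a + ((k - a).toNat : ℤ)) = k := by omega
        rw [this]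
    have h2 : ENNReal.ofReal (∑ k ∈ Finset.Icc a b, |f ((k : ℝ) / w) - f (((k : ℝ) - 1) / w)|)
        ≤ eVariationOn f Set.univ := by
      rw [ENNReal.ofReal_sum_of_nonneg (fun _ _ => abs_nonneg _), hIcc]
      exact hkey
    have h3 : ∑ k ∈ Finset.Icc a b, |f ((k : ℝ) / w) - f (((k : ℝ) - 1) / w)|
        ≤ (eVariationOn f Set.univ).toReal := by
      rw [← ENNReal.toReal_ofReal (Finset.sum_nonneg (fun _ _ => abs_nonneg _))]
      exact ENNReal.toReal_mono hBV h2
    exact h1.trans h3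

private lemma bv_summable (f : ℝ → ℝ) (hBV : BoundedVariationOn f Set.univ)
    {w : ℝ} (hw : 0 < w) (m : ℕ) :
    Summable (fun k : ℤ => |f ((k : ℝ) / w) - f (((k : ℝ) - (m : ℝ)) / w)|) := by
  have hd : Summable (fun k : ℤ => |f ((k : ℝ) / w) - f (((k : ℝ) - 1) / w)|) :=
    summable_of_sum_le (fun k => abs_nonneg _) (fun s => sum_abs_diff_le f hBV hw s)
  have hshift : ∀ j : ℤ, Summable (fun k : ℤ =>
      |f (((k + j : ℤ) : ℝ) / w) - f ((((k + j : ℤ) : ℝ) - 1) / w)|) := by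
    intro j
    have := (Equiv.addRight j).summable_iff.mpr hd
    exact this.congr (fun k => by simp [Equiv.coe_addRight])
  have hbound : Summable (fun k : ℤ => ∑ j ∈ Finset.range m,
      |f (((k - (m : ℤ) + (j : ℤ) + 1 : ℤ) : ℝ) / w)
        - f ((((k - (m : ℤ) + (j : ℤ) + 1 : ℤ) : ℝ) - 1) / w)|) := by
    apply summable_sum
    intro j _
    exact (hshift ((j : ℤ) + 1 - (m : ℤ))).congr (fun k => by
      congr 3 <;> · push_cast; ring)
  apply Summable.of_nonneg_of_le (fun k => abs_nonneg _) ?_ hbound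
  intro k
  set φ : ℕ → ℝ := fun j => f (((k - (m : ℤ) + (j : ℤ) : ℤ) : ℝ) / w) with hφ
  have htel : f ((k : ℝ) / w) - f (((k : ℝ) - (m : ℝ)) / w)
      = ∑ j ∈ Finset.range m, (φ (j + 1) - φ j) := by
    rw [Finset.sum_range_sub φ m]
    have e1 : φ m = f ((k : ℝ) / w) := by simp only [hφ]; norm_num
    have e2 : φ 0 = f (((k : ℝ) - (m : ℝ)) / w) := by
      simp only [hφ]; push_cast; ring_nf
    rw [e1, e2]
  rw [htel]
  refine (Finset.abs_sum_le_sum_abs _ _).trans (le_of_eq (Finset.sum_congr rfl ?_))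
  intro j _
  congr 3 <;> · simp only [hφ]; push_cast; ring

private lemma swap_lemma (ψ : ℤ → ℝ → ℝ) (hcψ : ∀ k, Continuous (ψ k))
    (C : ENNReal) (hC : C ≠ ⊤) (hbound : ∀ s : ℝ, ∑' k : ℤ, (‖ψ k s‖₊ : ENNReal) ≤ C)
    {a b : ℝ} (hab : a ≤ b) :
    ∫ s in a..b, (∑' k : ℤ, ψ k s) = ∑' k : ℤ, ∫ s in a..b, ψ k s := by
  rw [intervalIntegral.integral_of_le hab]
  have hswap := MeasureTheory.integral_tsum (μ := volume.restrict (Set.Ioc a b))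
      (f := fun k s => ψ k s) (fun k => (hcψ k).aestronglyMeasurable) ?_
  · rw [hswap]
    congr 1
    funext k
    rw [intervalIntegral.integral_of_le hab]
  · rw [← lintegral_tsum (fun k => ((hcψ k).measurable.enorm).aemeasurable)]
    have h1 : ∫⁻ s in Set.Ioc a b, (∑' k : ℤ, (‖ψ k s‖₊ : ENNReal)) ∂volume
        ≤ ∫⁻ _ in Set.Ioc a b, C ∂volume := lintegral_mono (fun s => hbound s)
    have h2 : (∫⁻ _ in Set.Ioc a b, C ∂volume) = C * volume (Set.Ioc a b) := by
      rw [setLIntegral_const]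
    exact ne_of_lt (lt_of_le_of_lt (h1.trans_eq h2)
      (ENNReal.mul_lt_top hC.lt_top measure_Ioc_lt_top))

theorem stmt6 (χ f : ℝ → ℝ) (M : ℝ)
    (hBV : BoundedVariationOn f Set.univ) (hf : ∀ x : ℝ, |f x| ≤ M)
    (hcont : Continuous χ) (hint : Integrable χ) (A : ℝ)
    (habs : ∀ u : ℝ, Summable fun k : ℤ => |χ (u - k)|)
    (hA : ∀ u : ℝ, ∑' k : ℤ, |χ (u - k)| ≤ A)
    (m : ℕ) (hm : 1 ≤ m) (w : ℝ) (hw : 0 < w) :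
    ∀ t : ℝ,
      HasDerivAt (avgSamplingSeries χ f m w)
        ((w / (m : ℝ)) * ∑' k : ℤ,
          (f ((k : ℝ) / w) - f (((k : ℝ) - (m : ℝ)) / w)) *
            χ (w * t - (k : ℝ) + (m : ℝ) / 2)) t := by
  intro t
  have hm0 : (0:ℝ) < (m:ℝ) := by exact_mod_cast hm
  have hM : 0 ≤ M := le_trans (abs_nonneg _) (hf 0)
  have hχle : ∀ x : ℝ, |χ x| ≤ A := by
    intro x
    have h0 := Summable.le_tsum (habs x) 0 (fun j _ => abs_nonneg _)
    simpa using h0.trans (hA x)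
  -- antiderivative of χ
  set F : ℝ → ℝ := fun x => ∫ s in (0:ℝ)..x, χ s with hF
  have hχint : ∀ a b : ℝ, IntervalIntegrable χ volume a b := fun a b => hint.intervalIntegrable
  have hFab : ∀ a b : ℝ, (∫ s in a..b, χ s) = F b - F a := by
    intro a b
    have h := intervalIntegral.integral_add_adjacent_intervals (hχint 0 a) (hχint a b)
    simp only [hF]
    linarith
  have hker : ∀ x : ℝ, avgKernel χ m x
      = (1 / (m:ℝ)) * (F (x + (m:ℝ)/2) - F (x - (m:ℝ)/2)) := by
    intro x
    have h := intervalIntegral.integral_comp_add_left (a := -((m:ℝ)/2)) (b := (m:ℝ)/2) χ x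
    rw [avgKernel, h, hFab]
    have e1 : x + -((m:ℝ)/2) = x - (m:ℝ)/2 := by ring
    rw [e1]
  -- summability of the sampling series at each point
  have hPsum : ∀ x : ℝ, Summable (fun k : ℤ => f ((k:ℝ) / w) * avgKernel χ m (x - (k:ℝ))) := by
    intro x
    set L : ℤ → ENNReal :=
      fun k => ∫⁻ v in Set.Ioc (-((m:ℝ)/2)) ((m:ℝ)/2), (‖χ (x + v - (k:ℝ))‖₊ : ENNReal) with hL
    have hck : ∀ k : ℤ, Continuous fun v : ℝ => χ (x + v - (k:ℝ)) := by
      intro k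
      exact hcont.comp (((continuous_const.add continuous_id).sub continuous_const))
    have hmeas : ∀ k : ℤ, Measurable fun v : ℝ => (‖χ (x + v - (k:ℝ))‖₊ : ENNReal) :=
      fun k => (hck k).measurable.nnnorm.coe_nnreal_ennreal
    have hLsum : ∑' k : ℤ, L k ≠ ⊤ := by
      simp only [hL]
      rw [← lintegral_tsum (fun k => (hmeas k).aemeasurable)]
      have hpt : ∀ v : ℝ, (∑' k : ℤ, (‖χ (x + v - (k:ℝ))‖₊ : ENNReal)) ≤ ENNReal.ofReal A := by
        intro v
        have h1 : ∀ k : ℤ, (‖χ (x + v - (k:ℝ))‖₊ : ENNReal)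
            = ENNReal.ofReal |χ (x + v - (k:ℝ))| := by
          intro k; rw [← enorm_eq_nnnorm, ← ofReal_norm, Real.norm_eq_abs]
        calc (∑' k : ℤ, (‖χ (x + v - (k:ℝ))‖₊ : ENNReal))
            = ∑' k : ℤ, ENNReal.ofReal |χ (x + v - (k:ℝ))| := by
              exact tsum_congr h1
          _ = ENNReal.ofReal (∑' k : ℤ, |χ (x + v - (k:ℝ))|) :=
              (ENNReal.ofReal_tsum_of_nonneg (fun k => abs_nonneg _) (habs (x + v))).symm
          _ ≤ ENNReal.ofReal A := ENNReal.ofReal_le_ofReal (hA (x + v))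
      have h2 : (∫⁻ v in Set.Ioc (-((m:ℝ)/2)) ((m:ℝ)/2),
            ∑' k : ℤ, (‖χ (x + v - (k:ℝ))‖₊ : ENNReal))
          ≤ ∫⁻ _ in Set.Ioc (-((m:ℝ)/2)) ((m:ℝ)/2), ENNReal.ofReal A :=
        lintegral_mono (fun v => hpt v)
      have h3 : (∫⁻ _ in Set.Ioc (-((m:ℝ)/2)) ((m:ℝ)/2), ENNReal.ofReal A)
          = ENNReal.ofReal A * volume (Set.Ioc (-((m:ℝ)/2)) ((m:ℝ)/2)) := setLIntegral_const _ _
      exact ne_of_lt (lt_of_le_of_lt (h2.trans_eq h3)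
        (ENNReal.mul_lt_top ENNReal.ofReal_lt_top measure_Ioc_lt_top))
    have hQsum : Summable (fun k : ℤ => (L k).toReal) := ENNReal.summable_toReal hLsum
    apply Summable.of_norm_bounded (g := fun k => (M * (1/(m:ℝ))) * (L k).toReal)
      (hQsum.mul_left _)
    intro k
    have h2 : |∫ v in (-((m:ℝ)/2))..((m:ℝ)/2), χ ((x - (k:ℝ)) + v)| ≤ (L k).toReal := by
      have h3 : (∫ v in (-((m:ℝ)/2))..((m:ℝ)/2), χ ((x - (k:ℝ)) + v))
          = ∫ v in (-((m:ℝ)/2))..((m:ℝ)/2), χ (x + v - (k:ℝ)) := by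
        apply intervalIntegral.integral_congr
        intro v _
        congr 1
        ring
      rw [h3]
      have hab : -((m:ℝ)/2) ≤ (m:ℝ)/2 := by linarith
      have h4 := intervalIntegral.abs_integral_le_integral_abs
        (f := fun v => χ (x + v - (k:ℝ))) (μ := volume) hab
      refine h4.trans (le_of_eq ?_)
      rw [intervalIntegral.integral_of_le hab]
      have h5 := integral_norm_eq_lintegral_enorm
        (μ := volume.restrict (Set.Ioc (-((m:ℝ)/2)) ((m:ℝ)/2)))
        ((hck k).aestronglyMeasurable)
      simpa [Real.norm_eq_abs, hL, enorm_eq_nnnorm] using h5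
    calc ‖f ((k:ℝ)/w) * avgKernel χ m (x - (k:ℝ))‖
        = |f ((k:ℝ)/w)| * |avgKernel χ m (x - (k:ℝ))| := by
          rw [Real.norm_eq_abs, abs_mul]
      _ ≤ M * ((1/(m:ℝ)) * (L k).toReal) := by
          refine mul_le_mul (hf _) ?_ (abs_nonneg _) hM
          rw [avgKernel, abs_mul, abs_of_pos (show (0:ℝ) < 1/(m:ℝ) by positivity)]
          exact mul_le_mul_of_nonneg_left h2 (by positivity)
      _ = (M * (1/(m:ℝ))) * (L k).toReal := by ring
  -- summability of the difference sequence
  have hgabs := bv_summable f hBV hw m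
  -- continuity of H
  set Hf : ℝ → ℝ := fun u => ∑' k : ℤ,
    (f ((k:ℝ)/w) - f (((k:ℝ) - (m:ℝ))/w)) * χ (u - (k:ℝ) + (m:ℝ)/2) with hHf
  have hHcont : Continuous Hf := by
    apply continuous_tsum
      (fun k => continuous_const.mul
        (hcont.comp ((continuous_id.sub continuous_const).add continuous_const)))
      (hgabs.mul_right A)
    intro k u
    simp only [Pi.mul_apply, Function.comp_apply, Pi.add_apply, Pi.sub_apply, id]
    rw [Real.norm_eq_abs, abs_mul]
    exact mul_le_mul_of_nonneg_left (hχle _) (abs_nonneg _)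
  -- summability lemmas at a fixed point
  have hsumT : ∀ s : ℝ, Summable (fun k : ℤ => f ((k:ℝ)/w) * χ (s - (k:ℝ) + (m:ℝ)/2)) := by
    intro s
    apply Summable.of_norm_bounded ((habs (s + (m:ℝ)/2)).mul_left M)
    intro k
    rw [Real.norm_eq_abs, abs_mul]
    have e1 : s - (k:ℝ) + (m:ℝ)/2 = s + (m:ℝ)/2 - (k:ℝ) := by ring
    rw [e1]
    exact mul_le_mul (hf _) le_rfl (abs_nonneg _) hM
  have hsumA : ∀ s : ℝ, Summable (fun k : ℤ => f ((k:ℝ)/w) * χ (s + ((m:ℝ)/2 - (k:ℝ)))) := by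
    intro s
    apply Summable.of_norm_bounded ((habs (s + (m:ℝ)/2)).mul_left M)
    intro k
    rw [Real.norm_eq_abs, abs_mul]
    have e1 : s + ((m:ℝ)/2 - (k:ℝ)) = s + (m:ℝ)/2 - (k:ℝ) := by ring
    rw [e1]
    exact mul_le_mul (hf _) le_rfl (abs_nonneg _) hM
  have hsumB : ∀ s : ℝ, Summable (fun k : ℤ => f ((k:ℝ)/w) * χ (s + (-((m:ℝ)/2) - (k:ℝ)))) := by
    intro s
    apply Summable.of_norm_bounded ((habs (s - (m:ℝ)/2)).mul_left M)
    intro k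
    rw [Real.norm_eq_abs, abs_mul]
    have e1 : s + (-((m:ℝ)/2) - (k:ℝ)) = s - (m:ℝ)/2 - (k:ℝ) := by ring
    rw [e1]
    exact mul_le_mul (hf _) le_rfl (abs_nonneg _) hM
  have hsum3 : ∀ s : ℝ, Summable
      (fun k : ℤ => f (((k:ℝ) - (m:ℝ))/w) * χ (s - (k:ℝ) + (m:ℝ)/2)) := by
    intro s
    apply Summable.of_norm_bounded ((habs (s + (m:ℝ)/2)).mul_left M)
    intro k
    rw [Real.norm_eq_abs, abs_mul]
    have e1 : s - (k:ℝ) + (m:ℝ)/2 = s + (m:ℝ)/2 - (k:ℝ) := by ring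
    rw [e1]
    exact mul_le_mul (hf _) le_rfl (abs_nonneg _) hM
  -- reindexing
  have reindex : ∀ s : ℝ, (∑' k : ℤ, f ((k:ℝ)/w) * χ (s + (-((m:ℝ)/2) - (k:ℝ))))
      = ∑' k : ℤ, f (((k:ℝ) - (m:ℝ))/w) * χ (s - (k:ℝ) + (m:ℝ)/2) := by
    intro s
    rw [← (Equiv.subRight (m:ℤ)).tsum_eq
      (fun k : ℤ => f ((k:ℝ)/w) * χ (s + (-((m:ℝ)/2) - (k:ℝ))))]
    apply tsum_congr
    intro k
    simp only [Equiv.subRight_apply]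
    push_cast
    have e1 : s + (-((m:ℝ)/2) - ((k:ℝ) - (m:ℝ))) = s - (k:ℝ) + (m:ℝ)/2 := by ring
    rw [e1]
  -- pointwise identity for the integrand
  have hψsum : ∀ s : ℝ,
      (∑' k : ℤ, f ((k:ℝ)/w) * (χ (s + ((m:ℝ)/2 - (k:ℝ))) - χ (s + (-((m:ℝ)/2) - (k:ℝ)))))
      = Hf s := by
    intro s
    have e1 : ∀ k : ℤ, f ((k:ℝ)/w) * (χ (s + ((m:ℝ)/2 - (k:ℝ))) - χ (s + (-((m:ℝ)/2) - (k:ℝ))))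
        = f ((k:ℝ)/w) * χ (s + ((m:ℝ)/2 - (k:ℝ))) - f ((k:ℝ)/w) * χ (s + (-((m:ℝ)/2) - (k:ℝ))) :=
      fun k => mul_sub _ _ _
    rw [tsum_congr e1, Summable.tsum_sub (hsumA s) (hsumB s), reindex s]
    have e2 : (∑' k : ℤ, f ((k:ℝ)/w) * χ (s + ((m:ℝ)/2 - (k:ℝ))))
        = ∑' k : ℤ, f ((k:ℝ)/w) * χ (s - (k:ℝ) + (m:ℝ)/2) := by
      apply tsum_congr
      intro k
      have e3 : s + ((m:ℝ)/2 - (k:ℝ)) = s - (k:ℝ) + (m:ℝ)/2 := by ring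
      rw [e3]
    rw [e2, ← Summable.tsum_sub (hsumT s) (hsum3 s)]
    exact tsum_congr (fun k => (sub_mul _ _ _).symm)
  -- uniform ENNReal bound for the swap
  have hMA : ∀ u : ℝ, (∑' k : ℤ, ENNReal.ofReal (M * |χ (u - (k:ℝ))|))
      ≤ ENNReal.ofReal M * ENNReal.ofReal A := by
    intro u
    calc (∑' k : ℤ, ENNReal.ofReal (M * |χ (u - (k:ℝ))|))
        = ∑' k : ℤ, ENNReal.ofReal M * ENNReal.ofReal |χ (u - (k:ℝ))| := by
          exact tsum_congr (fun k => ENNReal.ofReal_mul hM)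
      _ = ENNReal.ofReal M * ∑' k : ℤ, ENNReal.ofReal |χ (u - (k:ℝ))| := ENNReal.tsum_mul_left
      _ ≤ ENNReal.ofReal M * ENNReal.ofReal A := by
          apply mul_le_mul_right
          rw [← ENNReal.ofReal_tsum_of_nonneg (fun k => abs_nonneg _) (habs u)]
          exact ENNReal.ofReal_le_ofReal (hA u)
  have hbound : ∀ s : ℝ, (∑' k : ℤ,
      (‖f ((k:ℝ)/w) * (χ (s + ((m:ℝ)/2 - (k:ℝ))) - χ (s + (-((m:ℝ)/2) - (k:ℝ))))‖₊ : ENNReal))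
      ≤ ENNReal.ofReal M * ENNReal.ofReal A + ENNReal.ofReal M * ENNReal.ofReal A := by
    intro s
    have hb1 : ∀ k : ℤ,
        (‖f ((k:ℝ)/w) * (χ (s + ((m:ℝ)/2 - (k:ℝ))) - χ (s + (-((m:ℝ)/2) - (k:ℝ))))‖₊ : ENNReal)
        ≤ ENNReal.ofReal (M * |χ (s + (m:ℝ)/2 - (k:ℝ))|)
          + ENNReal.ofReal (M * |χ (s - (m:ℝ)/2 - (k:ℝ))|) := by
      intro k
      rw [← enorm_eq_nnnorm, ← ofReal_norm, Real.norm_eq_abs,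
        ← ENNReal.ofReal_add (by positivity) (by positivity)]
      apply ENNReal.ofReal_le_ofReal
      have e1 : s + ((m:ℝ)/2 - (k:ℝ)) = s + (m:ℝ)/2 - (k:ℝ) := by ring
      have e2 : s + (-((m:ℝ)/2) - (k:ℝ)) = s - (m:ℝ)/2 - (k:ℝ) := by ring
      rw [e1, e2, abs_mul]
      calc |f ((k:ℝ)/w)| * |χ (s + (m:ℝ)/2 - (k:ℝ)) - χ (s - (m:ℝ)/2 - (k:ℝ))|
          ≤ M * (|χ (s + (m:ℝ)/2 - (k:ℝ))| + |χ (s - (m:ℝ)/2 - (k:ℝ))|) :=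
            mul_le_mul (hf _) (abs_sub _ _) (abs_nonneg _) hM
        _ = M * |χ (s + (m:ℝ)/2 - (k:ℝ))| + M * |χ (s - (m:ℝ)/2 - (k:ℝ))| := by ring
    calc (∑' k : ℤ,
        (‖f ((k:ℝ)/w) * (χ (s + ((m:ℝ)/2 - (k:ℝ))) - χ (s + (-((m:ℝ)/2) - (k:ℝ))))‖₊ : ENNReal))
        ≤ ∑' k : ℤ, (ENNReal.ofReal (M * |χ (s + (m:ℝ)/2 - (k:ℝ))|)
            + ENNReal.ofReal (M * |χ (s - (m:ℝ)/2 - (k:ℝ))|)) := ENNReal.tsum_le_tsum hb1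
      _ = (∑' k : ℤ, ENNReal.ofReal (M * |χ (s + (m:ℝ)/2 - (k:ℝ))|))
          + ∑' k : ℤ, ENNReal.ofReal (M * |χ (s - (m:ℝ)/2 - (k:ℝ))|) := ENNReal.tsum_add
      _ ≤ ENNReal.ofReal M * ENNReal.ofReal A + ENNReal.ofReal M * ENNReal.ofReal A :=
          add_le_add (hMA (s + (m:ℝ)/2)) (hMA (s - (m:ℝ)/2))
  have hψcont : ∀ k : ℤ, Continuous (fun s : ℝ =>
      f ((k:ℝ)/w) * (χ (s + ((m:ℝ)/2 - (k:ℝ))) - χ (s + (-((m:ℝ)/2) - (k:ℝ))))) := by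
    intro k
    exact continuous_const.mul
      ((hcont.comp (continuous_id.add continuous_const)).sub
        (hcont.comp (continuous_id.add continuous_const)))
  have hCne : (ENNReal.ofReal M * ENNReal.ofReal A + ENNReal.ofReal M * ENNReal.ofReal A) ≠ ⊤ := by
    finiteness
  -- the key identity
  have key : ∀ x : ℝ, (∑' k : ℤ, f ((k:ℝ)/w) * avgKernel χ m (x - (k:ℝ)))
      = (∑' k : ℤ, f ((k:ℝ)/w) * avgKernel χ m (0 - (k:ℝ)))
        + (1/(m:ℝ)) * ∫ s in (0:ℝ)..x, Hf s := by
    intro x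
    have hIa : ∀ (d : ℝ), IntervalIntegrable (fun s => χ (s + d)) volume 0 x :=
      fun d => (hint.comp_add_right d).intervalIntegrable
    have hstep1 : (∑' k : ℤ, f ((k:ℝ)/w) * avgKernel χ m (x - (k:ℝ)))
        - (∑' k : ℤ, f ((k:ℝ)/w) * avgKernel χ m (0 - (k:ℝ)))
        = ∑' k : ℤ, (f ((k:ℝ)/w) * avgKernel χ m (x - (k:ℝ))
            - f ((k:ℝ)/w) * avgKernel χ m (0 - (k:ℝ))) :=
      (Summable.tsum_sub (hPsum x) (hPsum 0)).symm
    have hterm : ∀ k : ℤ, f ((k:ℝ)/w) * avgKernel χ m (x - (k:ℝ))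
        - f ((k:ℝ)/w) * avgKernel χ m (0 - (k:ℝ))
        = (1/(m:ℝ)) * ∫ s in (0:ℝ)..x,
            (f ((k:ℝ)/w) * (χ (s + ((m:ℝ)/2 - (k:ℝ))) - χ (s + (-((m:ℝ)/2) - (k:ℝ))))) := by
      intro k
      have h1 : (∫ s in (0:ℝ)..x,
            (f ((k:ℝ)/w) * (χ (s + ((m:ℝ)/2 - (k:ℝ))) - χ (s + (-((m:ℝ)/2) - (k:ℝ))))))
          = f ((k:ℝ)/w) * ((F (x + ((m:ℝ)/2 - (k:ℝ))) - F (0 + ((m:ℝ)/2 - (k:ℝ))))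
            - (F (x + (-((m:ℝ)/2) - (k:ℝ))) - F (0 + (-((m:ℝ)/2) - (k:ℝ))))) := by
        rw [intervalIntegral.integral_const_mul]
        congr 1
        rw [intervalIntegral.integral_sub (hIa _) (hIa _),
          intervalIntegral.integral_comp_add_right χ ((m:ℝ)/2 - (k:ℝ)),
          intervalIntegral.integral_comp_add_right χ (-((m:ℝ)/2) - (k:ℝ)), hFab, hFab]
      rw [h1, hker, hker]
      have e1 : x + ((m:ℝ)/2 - (k:ℝ)) = x - (k:ℝ) + (m:ℝ)/2 := by ring
      have e2 : (0:ℝ) + ((m:ℝ)/2 - (k:ℝ)) = 0 - (k:ℝ) + (m:ℝ)/2 := by ring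
      have e3 : x + (-((m:ℝ)/2) - (k:ℝ)) = x - (k:ℝ) - (m:ℝ)/2 := by ring
      have e4 : (0:ℝ) + (-((m:ℝ)/2) - (k:ℝ)) = 0 - (k:ℝ) - (m:ℝ)/2 := by ring
      rw [e1, e2, e3, e4]
      ring
    have hswap : (∑' k : ℤ, ∫ s in (0:ℝ)..x,
          (f ((k:ℝ)/w) * (χ (s + ((m:ℝ)/2 - (k:ℝ))) - χ (s + (-((m:ℝ)/2) - (k:ℝ))))))
        = ∫ s in (0:ℝ)..x, (∑' k : ℤ,
          f ((k:ℝ)/w) * (χ (s + ((m:ℝ)/2 - (k:ℝ))) - χ (s + (-((m:ℝ)/2) - (k:ℝ))))) := by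
      rcases le_total 0 x with hx | hx
      · exact (swap_lemma _ hψcont _ hCne hbound hx).symm
      · have h := swap_lemma _ hψcont _ hCne hbound hx
        calc (∑' k : ℤ, ∫ s in (0:ℝ)..x,
              (f ((k:ℝ)/w) * (χ (s + ((m:ℝ)/2 - (k:ℝ))) - χ (s + (-((m:ℝ)/2) - (k:ℝ))))))
            = ∑' k : ℤ, -(∫ s in x..(0:ℝ),
              (f ((k:ℝ)/w) * (χ (s + ((m:ℝ)/2 - (k:ℝ))) - χ (s + (-((m:ℝ)/2) - (k:ℝ)))))) := by
              exact tsum_congr (fun k => (intervalIntegral.integral_symm _ _))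
          _ = -(∑' k : ℤ, ∫ s in x..(0:ℝ),
              (f ((k:ℝ)/w) * (χ (s + ((m:ℝ)/2 - (k:ℝ))) - χ (s + (-((m:ℝ)/2) - (k:ℝ)))))) :=
              tsum_neg
          _ = -(∫ s in x..(0:ℝ), (∑' k : ℤ,
              f ((k:ℝ)/w) * (χ (s + ((m:ℝ)/2 - (k:ℝ))) - χ (s + (-((m:ℝ)/2) - (k:ℝ)))))) := by
              rw [← h]
          _ = ∫ s in (0:ℝ)..x, (∑' k : ℤ,
              f ((k:ℝ)/w) * (χ (s + ((m:ℝ)/2 - (k:ℝ))) - χ (s + (-((m:ℝ)/2) - (k:ℝ))))) :=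
              (intervalIntegral.integral_symm _ _).symm
    have hstep2 : (∑' k : ℤ, f ((k:ℝ)/w) * avgKernel χ m (x - (k:ℝ)))
        - (∑' k : ℤ, f ((k:ℝ)/w) * avgKernel χ m (0 - (k:ℝ)))
        = (1/(m:ℝ)) * ∫ s in (0:ℝ)..x, Hf s := by
      rw [hstep1, tsum_congr hterm, tsum_mul_left, hswap]
      congr 1
      apply intervalIntegral.integral_congr
      intro s _
      exact hψsum s
    linarith [hstep2]
  -- conclusion
  have hfun : avgSamplingSeries χ f m w = fun τ : ℝ =>
      (∑' k : ℤ, f ((k:ℝ)/w) * avgKernel χ m (0 - (k:ℝ)))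
        + (1/(m:ℝ)) * ∫ s in (0:ℝ)..(w*τ), Hf s := by
    funext τ
    rw [avgSamplingSeries]
    exact key (w*τ)
  rw [hfun]
  have hHint : IntervalIntegrable Hf volume 0 (w*t) := hHcont.intervalIntegrable _ _
  have hder1 : HasDerivAt (fun u : ℝ => ∫ s in (0:ℝ)..u, Hf s) (Hf (w*t)) (w*t) :=
    (intervalIntegral.integral_hasStrictDerivAt_right hHint
      (hHcont.stronglyMeasurableAtFilter _ _) hHcont.continuousAt).hasDerivAt
  have hder2 : HasDerivAt (fun τ : ℝ => w * τ) w t := by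
    simpa using (hasDerivAt_id t).const_mul w
  have hder3 : HasDerivAt (fun τ : ℝ => ∫ s in (0:ℝ)..(w*τ), Hf s) (Hf (w*t) * w) t :=
    HasDerivAt.comp t hder1 hder2
  have hder4 := (hder3.const_mul (1/(m:ℝ))).const_add
    (∑' k : ℤ, f ((k:ℝ)/w) * avgKernel χ m (0 - (k:ℝ)))
  refine hder4.congr_deriv ?_
  rw [hHf]
  ring
end
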